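/- Let S be a commutative ring of characteristic p (i.e. p = 0 in S). If x ∈ W(S) (the ring of p-typical Witt vectors) satisfies frobenius x = 1, then x is a unit in W(S). -/

import Mathlib

open WittVector

theorem frobenius_eq_one_isUnit (p : ℕ) [Fact p.Prime] (S : Type*) [CommRing S] [CharP S p]
    (x : WittVector p S) (hx : WittVector.frobenius x = 1) : IsUnit x := by
  have hp : Fact p.Prime := inferInstance
  -- the zeroth coefficient satisfies x₀ ^ p = 1
  have h0 : x.coeff 0 ^ p = 1 := by
    have := congrArg (fun w : WittVector p S => w.coeff 0) hx
    simpa [WittVector.coeff_frobenius_charP, WittVector.one_coeff_zero] using this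
  -- the Teichmüller lift of x₀ is a unit
  have hx0 : IsUnit (x.coeff 0) := by
    refine IsUnit.of_mul_eq_one (a := x.coeff 0) (x.coeff 0 ^ (p - 1)) ?_
    rw [← pow_succ']
    rw [Nat.sub_add_cancel hp.out.one_le]
    exact h0
  have hu : IsUnit (WittVector.teichmuller p (x.coeff 0)) :=
    hx0.map (WittVector.teichmuller p)
  obtain ⟨U, hU⟩ := hu
  -- frobenius of the Teichmüller lift is 1
  have hFu : WittVector.frobenius (U : WittVector p S) = 1 := by
    rw [hU]
    ext n
    cases n with
    | zero =>
        rw [WittVector.coeff_frobenius_charP, WittVector.teichmuller_coeff_zero, h0,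
          WittVector.one_coeff_zero]
    | succ n =>
        rw [WittVector.coeff_frobenius_charP, WittVector.teichmuller_coeff_pos _ _ _ n.succ_pos,
          zero_pow hp.out.ne_zero]
        exact (WittVector.one_coeff_eq_of_pos (p := p) (R := S) (n+1) n.succ_pos).symm
  -- write x = U * y
  set y : WittVector p S := (↑U⁻¹ : WittVector p S) * x with hy
  have hxy : x = (U : WittVector p S) * y := by
    rw [hy, ← mul_assoc, U.mul_inv, one_mul]
  -- frobenius y = 1
  have hFUinv : WittVector.frobenius ((↑U⁻¹ : WittVector p S)) = 1 := by
    have := congrArg (WittVector.frobenius (p := p) (R := S)) U.inv_mul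
    rw [map_mul, map_one, hFu, mul_one] at this
    exact this
  have hFy : WittVector.frobenius y = 1 := by
    rw [hy, map_mul, hFUinv, hx, one_mul]
  -- z := y - 1 has coeff 0 = 0 and frobenius z = 0
  set z : WittVector p S := y - 1 with hz
  have hz0 : z.coeff 0 = 0 := by
    have hy0 : y.coeff 0 = 1 := by
      have h1 : (↑U⁻¹ : WittVector p S).coeff 0 * (U : WittVector p S).coeff 0 = 1 := by
        have := congrArg (WittVector.constantCoeff (p := p) (R := S)) U.inv_mul
        rw [map_mul, map_one] at this
        exact this
      have h2 : (U : WittVector p S).coeff 0 = x.coeff 0 := by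
        rw [hU, WittVector.teichmuller_coeff_zero]
      calc y.coeff 0 = (↑U⁻¹ : WittVector p S).coeff 0 * x.coeff 0 :=
            WittVector.mul_coeff_zero _ _
        _ = 1 := by rw [← h2, h1]
    have := congrArg (WittVector.constantCoeff (p := p) (R := S)) hz
    simp only [map_sub, map_one] at this
    simpa [WittVector.constantCoeff, hy0] using this
  have hFz : WittVector.frobenius z = 0 := by
    rw [hz, map_sub, map_one, hFy, sub_self]
  -- z = V w, with w * p = 0, hence z ^ 2 = 0
  have hV : z = WittVector.verschiebung (z.shift 1) := by
    have := WittVector.eq_iterate_verschiebung (x := z) (n := 1)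
      (fun i hi => by interval_cases i; exact hz0)
    simpa using this
  have hwp : z.shift 1 * (p : WittVector p S) = 0 := by
    rw [← WittVector.frobenius_verschiebung, ← hV, hFz]
  have hz2 : z * z = 0 := by
    calc z * z = WittVector.verschiebung (z.shift 1 * WittVector.frobenius z) := by
          rw [WittVector.verschiebung_mul_frobenius, ← hV]
      _ = 0 := by rw [hFz, mul_zero, map_zero]
  -- hence y is a unit, so x is a unit
  have hyUnit : IsUnit y := by
    refine IsUnit.of_mul_eq_one (a := y) (1 - z) ?_
    have : (y - 1) * (y - 1) = 0 := by rw [← hz]; exact hz2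
    linear_combination -this + (z - y + 1) * hz
  rw [hxy]
  exact U.isUnit.mul hyUnit
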